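/- Let G be a simply connected Feynman graph and let f : G' → G be a locally injective morphism of Feynman graphs with G' connected. Then f_E, f_H and f_V are injective, and G' is simply connected. In particular, every étale morphism between connected simply connected Feynman graphs is pointwise injective. -/

import Mathlib

/-- A Feynman graph: finite sets of edges `E`, half-edges `H`, vertices `V`,
with an injective attachment `s : H → E`, a target map `t : H → V`, and a
fixed-point-free involution `inv : E → E`. -/
structure FG where
  E : Type
  H : Type
  V : Type
  finE : Finite E
  finH : Finite H
  finV : Finite V
  s : H → E
  t : H → V
  inv : E → E
  s_inj : Function.Injective s
  inv_inv : ∀ e, inv (inv e) = e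
  inv_ne : ∀ e, inv e ≠ e

attribute [instance] FG.finE FG.finH FG.finV

/-- A morphism of Feynman graphs. -/
structure FGHom (G G' : FG) where
  fE : G.E → G'.E
  fH : G.H → G'.H
  fV : G.V → G'.V
  comm_inv : ∀ e, fE (G.inv e) = G'.inv (fE e)
  comm_s : ∀ h, fE (G.s h) = G'.s (fH h)
  comm_t : ∀ h, fV (G.t h) = G'.t (fH h)

/-- Composition of morphisms of Feynman graphs. -/
def FGHom.comp {G₁ G₂ G₃ : FG} (g : FGHom G₂ G₃) (f : FGHom G₁ G₂) : FGHom G₁ G₃ where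
  fE := g.fE ∘ f.fE
  fH := g.fH ∘ f.fH
  fV := g.fV ∘ f.fV
  comm_inv := fun e => by simp only [Function.comp_apply, f.comm_inv, g.comm_inv]
  comm_s := fun h => by simp only [Function.comp_apply, f.comm_s, g.comm_s]
  comm_t := fun h => by simp only [Function.comp_apply, f.comm_t, g.comm_t]

/-- A morphism is an isomorphism if all three components are bijections. -/
def FGHom.IsIso {G G' : FG} (f : FGHom G G') : Prop :=
  Function.Bijective f.fE ∧ Function.Bijective f.fH ∧ Function.Bijective f.fV

/-- A morphism is locally injective if it is injective on each fibre `t⁻¹(v)`. -/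
def FGHom.LocInj {G G' : FG} (f : FGHom G G') : Prop :=
  ∀ h₁ h₂ : G.H, G.t h₁ = G.t h₂ → f.fH h₁ = f.fH h₂ → h₁ = h₂

/-- A morphism is étale if it induces a bijection `t⁻¹(v) → t'⁻¹(f_V v)`
for every vertex `v`. -/
def FGHom.Etale {G G' : FG} (f : FGHom G G') : Prop :=
  f.LocInj ∧
  ∀ (v : G.V) (h' : G'.H), G'.t h' = f.fV v → ∃ h : G.H, G.t h = v ∧ f.fH h = h'

/-- A port is an edge not in the image of `s`. -/
def FG.IsPort (G : FG) (e : G.E) : Prop := e ∉ Set.range G.s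

/-- An inner edge: both `e` and `inv e` are in the image of `s`. -/
def FG.IsInner (G : FG) (e : G.E) : Prop :=
  e ∈ Set.range G.s ∧ G.inv e ∈ Set.range G.s

/-- Connectedness: `E ⊔ V` is nonempty and every compatible `Bool`-colouring
of edges and vertices is constant. -/
def FG.Connected (G : FG) : Prop :=
  Nonempty (G.E ⊕ G.V) ∧
  ∀ (cE : G.E → Bool) (cV : G.V → Bool),
    (∀ e, cE (G.inv e) = cE e) →
    (∀ h, cV (G.t h) = cE (G.s h)) →
    ∀ x y : G.E ⊕ G.V, Sum.elim cE cV x = Sum.elim cE cV y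

/-- The line graph `L^k` (for `k ≥ 0`): edges `l_0, …, l_{2k+1}` (here the pair
`{l_{2j}, l_{2j+1}}` is encoded as `(j, false)` and `(j, true)`), `k` vertices,
and `2k` half-edges attaching `l_{2i-1}` and `l_{2i}` to the vertex `v_i`. -/
def lineGraph (k : ℕ) : FG where
  E := Fin (k+1) × Bool
  H := Fin k × Bool
  V := Fin k
  finE := inferInstance
  finH := inferInstance
  finV := inferInstance
  s := fun p => if p.2 then (p.1.castSucc, true) else (p.1.succ, false)
  t := fun p => p.1
  inv := fun p => (p.1, !p.2)
  s_inj := by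
    rintro ⟨i, bi⟩ ⟨j, bj⟩ hij
    cases bi <;> cases bj <;> simp_all [Fin.succ_inj, Fin.castSucc_inj]
  inv_inv := by rintro ⟨i, b⟩; simp
  inv_ne := by
    rintro ⟨i, b⟩ h
    rw [Prod.mk.injEq] at h
    exact (Bool.not_ne_self b) h.2

/-- The wheel graph `W^{m+1}` (this definition, with parameter `m : ℕ`, yields
exactly the wheel graphs `W^m` for `m ≥ 1`): `m+1` vertices in `Fin (m+1)`,
the vertex `i` carrying the two edges `(i, false)` and `(i, true)` (which are
also the half-edges, via `s = id`), and the involution pairing `(i, true)`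
with `(i+1, false)` cyclically. -/
def wheelGraph (m : ℕ) : FG where
  E := Fin (m+1) × Bool
  H := Fin (m+1) × Bool
  V := Fin (m+1)
  finE := inferInstance
  finH := inferInstance
  finV := inferInstance
  s := id
  t := fun p => p.1
  inv := fun p => if p.2 then (p.1 + 1, false) else (p.1 - 1, true)
  s_inj := fun _ _ h => h
  inv_inv := by
    rintro ⟨i, b⟩
    cases b <;> simp
  inv_ne := by
    rintro ⟨i, b⟩ h
    cases b <;> simp_all
/-- A connected graph is simply connected if it admits no locally injective
cycle (a cycle being a morphism from some wheel graph). -/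
def FG.SimplyConnected (G : FG) : Prop :=
  G.Connected ∧ ∀ (m : ℕ) (c : FGHom (wheelGraph m) G), ¬ c.LocInj

/-- The stick graph: two edges swapped by the involution, no half-edges, no
vertices. -/
def stickGraph : FG where
  E := Bool
  H := Empty
  V := Empty
  finE := inferInstance
  finH := inferInstance
  finV := inferInstance
  s := Empty.elim
  t := Empty.elim
  inv := fun b => !b
  s_inj := by intro a; exact a.elim
  inv_inv := Bool.not_not
  inv_ne := Bool.not_ne_self

/-- The corolla `C_X` on a finite set `X`: edges `X ⊔ X†` (with `inl x = x`,
`inr x = x†`, swapped by the involution), half-edges `X†` attached via the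
inclusion, and a single vertex. -/
def corolla (X : Type) [Finite X] : FG where
  E := X ⊕ X
  H := X
  V := Unit
  finE := inferInstance
  finH := inferInstance
  finV := inferInstance
  s := Sum.inr
  t := fun _ => ()
  inv := Sum.elim Sum.inr Sum.inl
  s_inj := fun _ _ h => by simpa using h
  inv_inv := by rintro (x | x) <;> rfl
  inv_ne := by rintro (x | x) h <;> simp at h

section Walks

/-- A walk of length `n` in a Feynman graph. -/
structure FGWalk (G : FG) (n : ℕ) where
  v : ℕ → G.V
  d : ∀ i, i < n → G.H
  a : ∀ i, i < n → G.H
  ht_d : ∀ i (hi : i < n), G.t (d i hi) = v i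
  ht_a : ∀ i (hi : i < n), G.t (a i hi) = v (i + 1)
  hs : ∀ i (hi : i < n), G.s (a i hi) = G.inv (G.s (d i hi))

/-- A walk is reduced (non-backtracking). -/
def FGWalk.Reduced {G : FG} {n : ℕ} (w : FGWalk G n) : Prop :=
  ∀ i (hi : i + 1 < n), w.a i (by omega) ≠ w.d (i + 1) hi

def FGReach (G : FG) (x y : G.V) : Prop :=
  ∃ n, ∃ w : FGWalk G n, w.v 0 = x ∧ w.v n = y

theorem FGReach.refl (G : FG) (x : G.V) : FGReach G x x :=
  ⟨0, ⟨fun _ => x, fun i hi => absurd hi (Nat.not_lt_zero i),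
    fun i hi => absurd hi (Nat.not_lt_zero i),
    fun i hi => absurd hi (Nat.not_lt_zero i),
    fun i hi => absurd hi (Nat.not_lt_zero i),
    fun i hi => absurd hi (Nat.not_lt_zero i)⟩, rfl, rfl⟩

theorem FGReach.snoc {G : FG} {x u : G.V} (hr : FGReach G x u) (k h' : G.H)
    (hk : G.t k = u) (hh : G.s h' = G.inv (G.s k)) : FGReach G x (G.t h') := by
  obtain ⟨n, w, h0, hn⟩ := hr
  refine ⟨n + 1, ⟨fun i => if i ≤ n then w.v i else G.t h',
    fun i _ => if h : i < n then w.d i h else k,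
    fun i _ => if h : i < n then w.a i h else h', ?_, ?_, ?_⟩, ?_, ?_⟩
  · intro i hi
    by_cases h : i < n
    · simp only [dif_pos h, if_pos (by omega : i ≤ n), w.ht_d]
    · have hin : i = n := by omega
      subst hin
      simp only [dif_neg h, if_pos le_rfl, hk, hn]
  · intro i hi
    by_cases h : i < n
    · simp only [dif_pos h, if_pos (by omega : i + 1 ≤ n), w.ht_a]
    · have hin : i = n := by omega
      subst hin
      simp only [dif_neg h, if_neg (by omega : ¬ i + 1 ≤ i)]
  · intro i hi
    by_cases h : i < n
    · simp only [dif_pos h, w.hs]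
    · simp only [dif_neg h, hh]
  · simp only [if_pos (Nat.zero_le n), h0]
  · simp only [if_neg (by omega : ¬ n + 1 ≤ n)]

end Walks

theorem connected_reach {G : FG} (hc : G.Connected) (x y : G.V) : FGReach G x y := by
  classical
  set cV : G.V → Bool := fun w => decide (FGReach G x w) with hcV
  set cE : G.E → Bool := fun e => decide
    ((∃ h, G.s h = e ∧ FGReach G x (G.t h)) ∨
     (∃ h, G.s h = G.inv e ∧ FGReach G x (G.t h))) with hcE
  have h1 : ∀ e, cE (G.inv e) = cE e := by
    intro e
    simp only [hcE, G.inv_inv]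
    exact decide_eq_decide.mpr (or_comm)
  have h2 : ∀ h, cV (G.t h) = cE (G.s h) := by
    intro h
    simp only [hcV, hcE]
    refine decide_eq_decide.mpr ⟨fun hr => Or.inl ⟨h, rfl, hr⟩, ?_⟩
    rintro (⟨h', hs', hr⟩ | ⟨h', hs', hr⟩)
    · rwa [G.s_inj hs'] at hr
    · have := FGReach.snoc hr h' h rfl (by rw [hs', G.inv_inv])
      exact this
  have := hc.2 cE cV h1 h2 (Sum.inr x) (Sum.inr y)
  simp only [Sum.elim_inr, hcV, decide_eq_decide] at this
  exact this.mp (FGReach.refl G x)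

theorem exists_reduced (G : FG) : ∀ n (w : FGWalk G n),
    ∃ m, ∃ u : FGWalk G m, u.Reduced ∧ u.v 0 = w.v 0 ∧ u.v m = w.v n := by
  intro n
  induction n using Nat.strong_induction_on with
  | _ n ih =>
    intro w
    by_cases hred : w.Reduced
    · exact ⟨n, w, hred, rfl, rfl⟩
    · rw [FGWalk.Reduced] at hred
      push_neg at hred
      obtain ⟨i0, hi0, hcan⟩ := hred
      have hlt : i0 < n := by omega
      have hlt2 : i0 + 2 ≤ n := by omega
      -- the reversed pair also cancels
      have hb : w.a (i0 + 1) hi0 = w.d i0 hlt := by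
        apply G.s_inj
        rw [w.hs, ← hcan, w.hs, G.inv_inv]
      have hv : w.v (i0 + 2) = w.v i0 := by
        rw [← w.ht_a (i0+1) hi0, hb, w.ht_d]
      set u : FGWalk G (n - 2) :=
        { v := fun j => if j < i0 then w.v j else w.v (j + 2)
          d := fun j hj => if h : j < i0 then w.d j (by omega) else w.d (j + 2) (by omega)
          a := fun j hj => if h : j < i0 then w.a j (by omega) else w.a (j + 2) (by omega)
          ht_d := by
            intro j hj
            by_cases h : j < i0
            · simp only [dif_pos h, if_pos h, w.ht_d]
            · simp only [dif_neg h, if_neg h, w.ht_d]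
          ht_a := by
            intro j hj
            by_cases h : j < i0
            · by_cases h2 : j + 1 < i0
              · simp only [dif_pos h, if_pos h2, w.ht_a]
              · have hji : j + 1 = i0 := by omega
                simp only [dif_pos h, if_neg h2, w.ht_a]
                rw [hji, ← hv]
            · simp only [dif_neg h, if_neg (by omega : ¬ j + 1 < i0), w.ht_a]
          hs := by
            intro j hj
            by_cases h : j < i0
            · simp only [dif_pos h, w.hs]
            · simp only [dif_neg h, w.hs] } with hu
      obtain ⟨m, u', hred', e0, e1⟩ := ih (n - 2) (by omega) u
      refine ⟨m, u', hred', ?_, ?_⟩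
      · rw [e0, hu]
        by_cases h : 0 < i0
        · simp [h]
        · have : i0 = 0 := by omega
          simp only [if_neg (by omega : ¬ (0:ℕ) < i0)]
          rw [show (0:ℕ) + 2 = i0 + 2 by omega, hv, this]
      · rw [e1, hu]
        simp only [if_neg (by omega : ¬ n - 2 < i0)]
        congr 1
        omega

theorem finsub (m : ℕ) (i : Fin (m+1)) :
    ((i - 1 : Fin (m+1)) : ℕ) = if i.val = 0 then m else i.val - 1 := by
  have h1 : ((1 : Fin (m+1)) : ℕ) = 1 % (m+1) := Fin.val_one' (m+1)
  rcases i with ⟨iv, hiv⟩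
  rw [Fin.sub_def]
  simp only [Fin.val_mk, h1]
  rcases Nat.eq_zero_or_pos m with hm | hm
  · subst hm; interval_cases iv <;> simp
  · have h2 : 1 % (m+1) = 1 := Nat.mod_eq_of_lt (by omega)
    rw [h2]
    rcases Nat.eq_zero_or_pos iv with h | h
    · subst h
      rw [show m + 1 - 1 + 0 = m by omega, Nat.mod_eq_of_lt (by omega)]
      simp
    · rw [show m + 1 - 1 + iv = (m+1) + (iv - 1) by omega, Nat.add_mod_left,
        Nat.mod_eq_of_lt (by omega)]
      split <;> omega

theorem FGWalk.a_congr {G : FG} {n : ℕ} (w : FGWalk G n) {i j : ℕ} (h : i = j)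
    {hi : i < n} {hj : j < n} : w.a i hi = w.a j hj := by subst h; rfl

theorem FGWalk.d_congr {G : FG} {n : ℕ} (w : FGWalk G n) {i j : ℕ} (h : i = j)
    {hi : i < n} {hj : j < n} : w.d i hi = w.d j hj := by subst h; rfl

/-- The half-edge labelling of the wheel built from a closed walk. -/
def wheelMap {G : FG} {m : ℕ} (w : FGWalk G (m+1)) : Fin (m+1) × Bool → G.H :=
  fun p => if p.2 then w.d p.1.val p.1.isLt else w.a (p.1 - 1).val (p.1 - 1).isLt

@[simp] theorem wheelMap_true {G : FG} {m : ℕ} (w : FGWalk G (m+1)) (i : Fin (m+1)) :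
    wheelMap w (i, true) = w.d i.val i.isLt := rfl

@[simp] theorem wheelMap_false {G : FG} {m : ℕ} (w : FGWalk G (m+1)) (i : Fin (m+1)) :
    wheelMap w (i, false) = w.a (i - 1).val (i - 1).isLt := rfl

theorem no_closed_reduced (G : FG) (hsc : G.SimplyConnected) (m : ℕ)
    (w : FGWalk G (m + 1)) (hcl : w.v (m + 1) = w.v 0)
    (hred : w.Reduced)
    (hseam : w.a m (Nat.lt_succ_self m) ≠ w.d 0 (Nat.succ_pos m)) : False := by
  classical
  have key : ∀ i : Fin (m+1), G.t (w.a (i - 1).val (i - 1).isLt) = w.v i.val := by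
    intro i
    rw [w.ht_a]
    have hs1 := finsub m i
    by_cases h0 : i.val = 0
    · rw [if_pos h0] at hs1
      rw [hs1, hcl, h0]
    · rw [if_neg h0] at hs1
      rw [hs1]
      congr 1
      omega
  have hd : ∀ i : Fin (m+1), w.a (i - 1).val (i - 1).isLt ≠ w.d i.val i.isLt := by
    intro i hcon
    have hs1 := finsub m i
    by_cases h0 : i.val = 0
    · rw [if_pos h0] at hs1
      have e1 : w.a m (Nat.lt_succ_self m) = w.a (i - 1).val (i - 1).isLt :=
        w.a_congr hs1.symm
      have e2 : w.d i.val i.isLt = w.d 0 (Nat.succ_pos m) := w.d_congr h0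
      exact hseam (e1.trans (hcon.trans e2))
    · rw [if_neg h0] at hs1
      have e1 : w.a (i.val - 1) (by omega) = w.a (i - 1).val (i - 1).isLt :=
        w.a_congr hs1.symm
      have e2 : w.d i.val i.isLt = w.d (i.val - 1 + 1) (by omega) :=
        w.d_congr (by omega)
      exact hred (i.val - 1) (by omega) (e1.trans (hcon.trans e2))
  refine hsc.2 m
    { fE := fun p => G.s (wheelMap w p)
      fH := wheelMap w
      fV := fun i => w.v i.val
      comm_s := fun h => rfl
      comm_t := ?_
      comm_inv := ?_ } ?_
  · -- comm_inv
    rintro ⟨i, b⟩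
    cases b
    · show G.s (wheelMap w (i - 1, true)) = G.inv (G.s (wheelMap w (i, false)))
      rw [wheelMap_true, wheelMap_false, w.hs, G.inv_inv]
    · show G.s (wheelMap w (i + 1, false)) = G.inv (G.s (wheelMap w (i, true)))
      rw [wheelMap_false, wheelMap_true]
      have e1 : w.a ((i + 1 - 1 : Fin (m+1))).val (i + 1 - 1).isLt = w.a i.val i.isLt :=
        w.a_congr (by rw [show i + 1 - 1 = i from add_sub_cancel_right i 1])
      rw [e1, ← w.hs]
  · -- comm_t
    rintro ⟨i, b⟩
    cases b
    · exact (key i).symm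
    · exact (w.ht_d i.val i.isLt).symm
  · -- LocInj
    rintro ⟨i, b₁⟩ ⟨j, b₂⟩ ht hFeq
    have hij : i = j := ht
    subst hij
    cases b₁ <;> cases b₂
    · rfl
    · exact absurd hFeq (hd i)
    · exact absurd hFeq.symm (hd i)
    · rfl

/-- Image of a walk under a morphism. -/
def FGHom.mapWalk {G' G : FG} (f : FGHom G' G) {n : ℕ} (w : FGWalk G' n) : FGWalk G n where
  v := fun i => f.fV (w.v i)
  d := fun i hi => f.fH (w.d i hi)
  a := fun i hi => f.fH (w.a i hi)
  ht_d := fun i hi => by rw [← f.comm_t, w.ht_d]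
  ht_a := fun i hi => by rw [← f.comm_t, w.ht_a]
  hs := fun i hi => by rw [← f.comm_s, ← f.comm_s, w.hs, f.comm_inv]

theorem fH_case (G' G : FG) (f : FGHom G' G) (hsc : G.SimplyConnected) (hli : f.LocInj) :
    ∀ n (w : FGWalk G' n), w.Reduced →
    ∀ h1 h2 : G'.H, h1 ≠ h2 → f.fH h1 = f.fH h2 →
    w.v 0 = G'.t h1 → w.v n = G'.t h2 → False := by
  intro n
  induction n using Nat.strong_induction_on with
  | _ n ih =>
  intro w hred h1 h2 hne hf h0 hn
  have htne : G'.t h1 ≠ G'.t h2 := fun h => hne (hli _ _ h hf)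
  match n, w, hred, h0, hn, ih with
  | 0, w, hred, h0, hn, ih => exact htne (h0 ▸ hn ▸ rfl)
  | (n+1), w, hred, h0, hn, ih =>
    -- the image walk is closed
    have hcl : (f.mapWalk w).v (n+1) = (f.mapWalk w).v 0 := by
      show f.fV (w.v (n+1)) = f.fV (w.v 0)
      rw [h0, hn, f.comm_t, f.comm_t, hf]
    have hmred : (f.mapWalk w).Reduced := by
      intro i hi hcon
      exact hred i hi (hli _ _ (by rw [w.ht_a, w.ht_d]) hcon)
    by_cases hseam : f.fH (w.a n (Nat.lt_succ_self n)) = f.fH (w.d 0 (Nat.succ_pos n))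
    · -- the seam cancels
      match n, w, hred, h0, hn, hcl, hmred, hseam, ih with
      | 0, w, hred, h0, hn, hcl, hmred, hseam, ih =>
        -- single step: contradiction with inv_ne
        have : f.fE (G'.s (w.a 0 Nat.one_pos)) = f.fE (G'.s (w.d 0 Nat.one_pos)) := by
          rw [f.comm_s, f.comm_s, hseam]
        rw [w.hs, f.comm_inv] at this
        exact G.inv_ne _ this
      | (k+1), w, hred, h0, hn, hcl, hmred, hseam, ih =>
        -- cancel the first and last steps
        have hy : f.fH (w.d (k+1) (by omega)) = f.fH (w.a 0 (by omega)) := by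
          apply G.s_inj
          rw [← f.comm_s, ← f.comm_s]
          have e1 : G'.s (w.d (k+1) (by omega)) =
              G'.inv (G'.s (w.a (k+1) (Nat.lt_succ_self (k+1)))) := by
            rw [w.hs, G'.inv_inv]
          have e2 : G'.s (w.a 0 (by omega)) = G'.inv (G'.s (w.d 0 (by omega))) :=
            w.hs 0 (by omega)
          rw [e1, e2, f.comm_inv, f.comm_inv]
          congr 1
          rw [f.comm_s, f.comm_s, hseam]
        have hne2 : w.a 0 (by omega) ≠ w.d (k+1) (by omega) := by
          intro hcon
          apply htne
          have : G'.s (w.d 0 (by omega)) = G'.s (w.a (k+1) (Nat.lt_succ_self (k+1))) := by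
            have hgs := congrArg G'.s hcon
            rw [w.hs] at hgs
            have hgs2 := congrArg G'.inv hgs
            rw [G'.inv_inv] at hgs2
            exact hgs2.trans (w.hs (k+1) (Nat.lt_succ_self (k+1))).symm
          have hdd : w.d 0 (by omega) = w.a (k+1) (Nat.lt_succ_self (k+1)) := G'.s_inj this
          rw [← h0, ← hn, ← w.ht_d 0 (by omega), ← w.ht_a (k+1) (Nat.lt_succ_self (k+1)), hdd]
        -- middle walk
        set u : FGWalk G' k :=
          { v := fun j => w.v (j + 1)
            d := fun j hj => w.d (j + 1) (by omega)
            a := fun j hj => w.a (j + 1) (by omega)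
            ht_d := fun j hj => w.ht_d (j+1) (by omega)
            ht_a := fun j hj => w.ht_a (j+1) (by omega)
            hs := fun j hj => w.hs (j+1) (by omega) } with hu
        have hured : u.Reduced := fun j hj => hred (j+1) (by omega)
        exact ih k (by omega) u hured (w.a 0 (by omega)) (w.d (k+1) (by omega)) hne2 hy.symm
          (w.ht_a 0 (by omega)).symm (w.ht_d (k+1) (by omega)).symm
    · exact no_closed_reduced G hsc n (f.mapWalk w) hcl hmred hseam

theorem fH_injective (G' G : FG) (f : FGHom G' G) (hsc : G.SimplyConnected)
    (hconn' : G'.Connected) (hli : f.LocInj) : Function.Injective f.fH := by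
  intro h1 h2 hf
  by_contra hne
  obtain ⟨n, w, h0, hn⟩ := connected_reach hconn' (G'.t h1) (G'.t h2)
  obtain ⟨m, u, hured, e0, e1⟩ := exists_reduced G' n w
  exact fH_case G' G f hsc hli m u hured h1 h2 hne hf (e0.trans h0) (e1.trans hn)

theorem fV_injective (G' G : FG) (f : FGHom G' G) (hsc : G.SimplyConnected)
    (hconn' : G'.Connected) (hli : f.LocInj) : Function.Injective f.fV := by
  intro x y hfv
  by_contra hne
  obtain ⟨n0, w0, h00, hn0⟩ := connected_reach hconn' x y
  obtain ⟨n, w, hured, h0, hn⟩ := exists_reduced G' n0 w0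
  rw [h00] at h0; rw [hn0] at hn
  match n, w, h0, hn with
  | 0, w, h0, hn => exact hne (h0 ▸ hn ▸ rfl)
  | (n+1), w, h0, hn =>
    have hcl : (f.mapWalk w).v (n+1) = (f.mapWalk w).v 0 := by
      show f.fV (w.v (n+1)) = f.fV (w.v 0)
      rw [h0, hn, hfv]
    have hmred : (f.mapWalk w).Reduced := by
      intro i hi hcon
      exact hured i hi (hli _ _ (by rw [w.ht_a, w.ht_d]) hcon)
    by_cases hseam : f.fH (w.a n (Nat.lt_succ_self n)) = f.fH (w.d 0 (Nat.succ_pos n))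
    · have heq := fH_injective G' G f hsc hconn' hli hseam
      apply hne
      rw [← h0, ← hn, ← w.ht_a n (Nat.lt_succ_self n), ← w.ht_d 0 (Nat.succ_pos n), heq]
    · exact no_closed_reduced G hsc n (f.mapWalk w) hcl hmred hseam

theorem stick_case (G' : FG) (hconn' : G'.Connected) (e1 : G'.E)
    (hA : ¬ ∃ h, G'.s h = e1) (hB : ¬ ∃ h, G'.s h = G'.inv e1) :
    ∀ e : G'.E, e = e1 ∨ e = G'.inv e1 := by
  classical
  intro e
  have hsymm : ∀ e' : G'.E,
      (G'.inv e' = e1 ∨ G'.inv e' = G'.inv e1) ↔ (e' = e1 ∨ e' = G'.inv e1) := by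
    intro e'
    constructor
    · rintro (h | h)
      · right; rw [← h, G'.inv_inv]
      · left
        have := congrArg G'.inv h
        rwa [G'.inv_inv, G'.inv_inv] at this
    · rintro (h | h)
      · right; rw [h]
      · left; rw [h, G'.inv_inv]
  have key := hconn'.2 (fun e' => decide (e' = e1 ∨ e' = G'.inv e1)) (fun _ => false)
    (fun e' => decide_eq_decide.mpr (hsymm e'))
    (fun h => by
      symm
      refine decide_eq_false ?_
      rintro (hh | hh)
      · exact hA ⟨h, hh⟩
      · exact hB ⟨h, hh⟩)
    (Sum.inl e) (Sum.inl e1)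
  rw [Sum.elim_inl, Sum.elim_inl] at key
  exact of_decide_eq_true (key.trans (decide_eq_true (Or.inl rfl)))

theorem pendant_case (G' G : FG) (f : FGHom G' G) (hsc : G.SimplyConnected)
    (hconn' : G'.Connected) (hli : f.LocInj)
    (e1 e2 : G'.E) (h1 g2 : G'.H) (hs1 : G'.s h1 = e1) (hs2 : G'.s g2 = G'.inv e2)
    (hB1 : ¬ ∃ h, G'.s h = G'.inv e1) (hA2 : ¬ ∃ h, G'.s h = e2)
    (hfe : f.fE e1 = f.fE e2) : False := by
  obtain ⟨n0, w0, h00, hn0⟩ := connected_reach hconn' (G'.t h1) (G'.t g2)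
  obtain ⟨n, w, hured, h0, hn⟩ := exists_reduced G' n0 w0
  rw [h00] at h0; rw [hn0] at hn
  -- extended closed walk of length n+1 in G
  set W : FGWalk G (n+1) :=
    { v := fun i => f.fV (w.v (i % (n+1)))
      d := fun i hi => if h : i < n then f.fH (w.d i h) else f.fH g2
      a := fun i hi => if h : i < n then f.fH (w.a i h) else f.fH h1
      ht_d := by
        intro i hi
        show G.t (if h : i < n then f.fH (w.d i h) else f.fH g2) = f.fV (w.v (i % (n+1)))
        by_cases h : i < n
        · rw [dif_pos h, ← f.comm_t, w.ht_d, Nat.mod_eq_of_lt (by omega)]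
        · rw [dif_neg h, ← f.comm_t, Nat.mod_eq_of_lt (by omega),
            show i = n from by omega, hn]
      ht_a := by
        intro i hi
        show G.t (if h : i < n then f.fH (w.a i h) else f.fH h1) =
          f.fV (w.v ((i + 1) % (n+1)))
        by_cases h : i < n
        · rw [dif_pos h, ← f.comm_t, w.ht_a, Nat.mod_eq_of_lt (by omega)]
        · rw [dif_neg h, ← f.comm_t, show i = n from by omega, Nat.mod_self, h0]
      hs := by
        intro i hi
        show G.s (if h : i < n then f.fH (w.a i h) else f.fH h1) =
          G.inv (G.s (if h : i < n then f.fH (w.d i h) else f.fH g2))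
        by_cases h : i < n
        · rw [dif_pos h, dif_pos h, ← f.comm_s, ← f.comm_s, w.hs, f.comm_inv]
        · rw [dif_neg h, dif_neg h, ← f.comm_s, ← f.comm_s, hs1, hs2, f.comm_inv,
            G.inv_inv, hfe] } with hW
  have hWred : W.Reduced := by
    intro i hi hcon
    rw [hW] at hcon
    have hcon' : (if h : i < n then f.fH (w.a i h) else f.fH h1) =
        (if h : i + 1 < n then f.fH (w.d (i+1) h) else f.fH g2) := hcon
    have hilt : i < n := by omega
    by_cases h : i + 1 < n
    · rw [dif_pos hilt, dif_pos h] at hcon'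
      exact hured i h (hli _ _ (by rw [w.ht_a, w.ht_d]) hcon')
    · rw [dif_pos hilt, dif_neg h] at hcon'
      have hag : w.a i hilt = g2 := by
        apply hli _ _ _ hcon'
        rw [w.ht_a, show i + 1 = n from by omega, hn]
      apply hA2
      refine ⟨w.d i hilt, ?_⟩
      have h5 := congrArg G'.s hag
      rw [w.hs, hs2] at h5
      have h6 := congrArg G'.inv h5
      rwa [G'.inv_inv, G'.inv_inv] at h6
  have hWseam : W.a n (Nat.lt_succ_self n) ≠ W.d 0 (Nat.succ_pos n) := by
    rw [hW]
    show (if h : n < n then f.fH (w.a n h) else f.fH h1) ≠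
      (if h : 0 < n then f.fH (w.d 0 h) else f.fH g2)
    rw [dif_neg (lt_irrefl n)]
    by_cases hn0' : 0 < n
    · rw [dif_pos hn0']
      intro hcon
      have hh : h1 = w.d 0 hn0' := by
        apply hli _ _ _ hcon
        rw [w.ht_d, h0]
      apply hB1
      refine ⟨w.a 0 hn0', ?_⟩
      rw [w.hs, ← hh, hs1]
    · rw [dif_neg hn0']
      intro hcon
      have h7 := congrArg G.s hcon
      rw [← f.comm_s, ← f.comm_s, hs1, hs2, f.comm_inv, hfe] at h7
      exact G.inv_ne _ h7.symm
  refine no_closed_reduced G hsc n W ?_ hWred hWseam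
  rw [hW]
  show f.fV (w.v ((n+1) % (n+1))) = f.fV (w.v (0 % (n+1)))
  rw [Nat.mod_self, Nat.zero_mod]

theorem fE_injective (G' G : FG) (f : FGHom G' G) (hsc : G.SimplyConnected)
    (hconn' : G'.Connected) (hli : f.LocInj) : Function.Injective f.fE := by
  classical
  intro e1 e2 hfe
  by_contra hne
  have hne' : e2 ≠ G'.inv e1 := by
    intro h
    subst h
    rw [f.comm_inv] at hfe
    exact G.inv_ne _ hfe.symm
  have hBB : (∃ h, G'.s h = G'.inv e1) → (∃ h, G'.s h = G'.inv e2) → False := by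
    rintro ⟨b1, hb1⟩ ⟨b2, hb2⟩
    apply hne
    have h8 : G'.inv e1 = G'.inv e2 := by
      rw [← hb1, ← hb2]
      congr 1
      apply fH_injective G' G f hsc hconn' hli
      apply G.s_inj
      rw [← f.comm_s, ← f.comm_s, hb1, hb2, f.comm_inv, f.comm_inv, hfe]
    have h9 := congrArg G'.inv h8
    rwa [G'.inv_inv, G'.inv_inv] at h9
  have hstick2 : (¬ ∃ h, G'.s h = e2) → (¬ ∃ h, G'.s h = G'.inv e2) → False := by
    intro hA2 hB2
    rcases stick_case G' hconn' e2 hA2 hB2 e1 with h | h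
    · exact hne h
    · apply hne'
      rw [h, G'.inv_inv]
  by_cases hA1 : ∃ h, G'.s h = e1
  · obtain ⟨a1, ha1⟩ := hA1
    by_cases hA2 : ∃ h, G'.s h = e2
    · obtain ⟨a2, ha2⟩ := hA2
      apply hne
      rw [← ha1, ← ha2]
      congr 1
      apply fH_injective G' G f hsc hconn' hli
      apply G.s_inj
      rw [← f.comm_s, ← f.comm_s, ha1, ha2, hfe]
    · by_cases hB2 : ∃ h, G'.s h = G'.inv e2
      · by_cases hB1 : ∃ h, G'.s h = G'.inv e1
        · exact hBB hB1 hB2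
        · obtain ⟨b2, hb2⟩ := hB2
          exact pendant_case G' G f hsc hconn' hli e1 e2 a1 b2 ha1 hb2 hB1 hA2 hfe
      · exact hstick2 hA2 hB2
  · by_cases hB1 : ∃ h, G'.s h = G'.inv e1
    · obtain ⟨b1, hb1⟩ := hB1
      by_cases hB2 : ∃ h, G'.s h = G'.inv e2
      · exact hBB ⟨b1, hb1⟩ hB2
      · by_cases hA2 : ∃ h, G'.s h = e2
        · obtain ⟨a2, ha2⟩ := hA2
          exact pendant_case G' G f hsc hconn' hli e2 e1 a2 b1 ha2 hb1 hB2 hA1 hfe.symm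
        · exact hstick2 hA2 hB2
    · rcases stick_case G' hconn' e1 hA1 hB1 e2 with h | h
      · exact hne h.symm
      · exact hne' h

theorem locInj_comp {G₁ G₂ G₃ : FG} (g : FGHom G₂ G₃) (f : FGHom G₁ G₂)
    (hg : g.LocInj) (hf : f.LocInj) : (g.comp f).LocInj :=
  fun h1 h2 ht hfh =>
    hf h1 h2 ht (hg _ _ (by rw [← f.comm_t, ← f.comm_t, ht]) hfh)

/-- A locally injective morphism from a connected Feynman graph into a simply
connected Feynman graph is pointwise injective, and its source is simply
connected.  In particular, every étale morphism between connected simply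
connected Feynman graphs is pointwise injective. -/
theorem locallyInjective_into_simplyConnected
    (G' G : FG) (f : FGHom G' G) (hsc : G.SimplyConnected)
    (hconn' : G'.Connected) (hli : f.LocInj) :
    (Function.Injective f.fE ∧ Function.Injective f.fH ∧
      Function.Injective f.fV) ∧
    G'.SimplyConnected ∧
    (∀ (K' K : FG) (g : FGHom K' K), K'.SimplyConnected → K.SimplyConnected →
      g.Etale →
      Function.Injective g.fE ∧ Function.Injective g.fH ∧
        Function.Injective g.fV) := by
  have main : ∀ (K' K : FG) (g : FGHom K' K), K.SimplyConnected → K'.Connected →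
      g.LocInj →
      (Function.Injective g.fE ∧ Function.Injective g.fH ∧ Function.Injective g.fV) ∧
      K'.SimplyConnected := by
    intro K' K g hK hK' hg
    exact ⟨⟨fE_injective K' K g hK hK' hg, fH_injective K' K g hK hK' hg,
      fV_injective K' K g hK hK' hg⟩,
      hK', fun m c hc => hK.2 m (g.comp c) (locInj_comp g c hg hc)⟩
  exact ⟨(main G' G f hsc hconn' hli).1, (main G' G f hsc hconn' hli).2,
    fun K' K g hK' hK hg => (main K' K g hK hK'.1 hg.1).1⟩
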